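/- For every ε > 0 there are infinitely many n for which there exists a positive integer s with s ≤ (2+ε)·n^{3/4} and an s-regular bipartite graph H on bipartition (A,B) with |A|=|B|=n such that no perfect matching in the bipartite complement of H is acceptable for H. Consequently b(n) < (2+o(1))·n^{3/4} for infinitely many n. -/

import Mathlib

/-- A bipartite graph on parts `A` and `B`, each a copy of `Fin n`, is modelled by the
relation `E : Fin n → Fin n → Prop` recording which pairs `(a, b)` with `a ∈ A`, `b ∈ B`
are joined by an edge.  `BipRegular n s E` says that this bipartite graph is `s`-regular:
every vertex of `A` and every vertex of `B` is incident with exactly `s` edges. -/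
def BipRegular (n s : ℕ) (E : Fin n → Fin n → Prop) : Prop :=
  (∀ a : Fin n, {b : Fin n | E a b}.ncard = s) ∧
  (∀ b : Fin n, {a : Fin n | E a b}.ncard = s)

/-- A perfect matching in the bipartite graph `G` (given by the bijection `σ : A ≃ B`,
i.e. the matching consists of the edges `(a, σ a)`) is *acceptable* for the bipartite
graph `H` if no two of its edges form a 4-cycle together with two edges of `H`:
there are no `a ≠ a'` with `(a, σ a')` and `(a', σ a)` both edges of `H`. -/
def AcceptableMatching (n : ℕ) (G H : Fin n → Fin n → Prop) (σ : Fin n ≃ Fin n) : Prop :=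
  (∀ a : Fin n, G a (σ a)) ∧
  ∀ a a' : Fin n, a ≠ a' → ¬ (H a (σ a') ∧ H a' (σ a))

/-- `bFn n` is the minimum `s` such that there exists an `s`-regular bipartite graph `H`
on parts of size `n` for which no perfect matching in the bipartite complement of `H`
is acceptable for `H`. -/
noncomputable def bFn (n : ℕ) : ℕ :=
  sInf {s : ℕ | ∃ H : Fin n → Fin n → Prop, BipRegular n s H ∧
    ¬ ∃ σ : Fin n ≃ Fin n, AcceptableMatching n (fun a b => ¬ H a b) H σ}

/-!
### Auxiliary construction

For an odd prime `p` we construct an `s`-regular bipartite graph `H` on parts of size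
`n = p^4 + p^3` with `s = p^3` such that no perfect matching of the bipartite complement
of `H` is acceptable for `H`.  The graph is the disjoint union of a complete bipartite
block `K_{p^3,p^3}` and the "quadric Cayley graph" on `W = (ZMod p)^3 × ZMod p` whose
connection set is the graph `D` of the quadratic form `Q(u) = u₁² + u₂² + u₃²`.

The point is that `D` is a relative difference set: for `w ∉ {0} × ZMod p` the equation
`y - x = d, y - x' = d'` with `d, d' ∈ D`, `x - x' = w` has exactly `p²` solutions, which
by a Cauchy–Schwarz argument implies that any two sets `S, T ⊆ W` of size `p^3` are joined
by at least one `D`-edge.  An acceptable matching would produce such a pair of sets with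
no `D`-edge (the `σ`-image of the complete block and the `σ`-preimage of its right side),
a contradiction.
-/

open Finset

namespace BFN

variable (p : ℕ) [Fact p.Prime]

abbrev U : Type := ZMod p × ZMod p × ZMod p
abbrev W : Type := U p × ZMod p

def Q (u : U p) : ZMod p := u.1*u.1 + u.2.1*u.2.1 + u.2.2*u.2.2

def Dmem (w : W p) : Prop := w.2 = Q p w.1

instance : DecidablePred (Dmem p) := fun w => by unfold Dmem; infer_instance

lemma two_ne_zero' (hp2 : p ≠ 2) : (2 : ZMod p) ≠ 0 := by
  have hp : (p : ℕ).Prime := Fact.out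
  intro h
  have h2 : ((2 : ℕ) : ZMod p) = 0 := by exact_mod_cast h
  have hd := (ZMod.natCast_eq_zero_iff 2 p).mp h2
  exact hp2 ((Nat.prime_dvd_prime_iff_eq hp Nat.prime_two).mp hd)

lemma card_U : Fintype.card (U p) = p^3 := by simp [ZMod.card p]; ring

lemma card_W : Fintype.card (W p) = p^4 := by simp [ZMod.card p]; ring

/-- Key pair-count lemma: for `w ≠ 0` the number of `u` with
`Q (u + w.1) = Q u + w.2` is at most `p^2`. -/
lemma key_pair (hp2 : p ≠ 2) (w : W p) (hw : w ≠ 0) :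
    (univ.filter (fun u : U p => Q p (u + w.1) = Q p u + w.2)).card ≤ p^2 := by
  by_cases ha : w.1 = 0
  · have : (univ.filter (fun u : U p => Q p (u + w.1) = Q p u + w.2)) = ∅ := by
      ext u
      simp only [mem_filter, mem_univ, true_and, Finset.notMem_empty, iff_false]
      rw [ha]
      intro h
      rw [add_zero] at h
      have : w.2 = 0 := by linear_combination -h
      exact hw (Prod.ext ha this)
    simp [this]
  · have h2 := two_ne_zero' p hp2
    set a := w.1 with hadef
    have hcoord : a.1 ≠ 0 ∨ a.2.1 ≠ 0 ∨ a.2.2 ≠ 0 := by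
      by_contra hq
      push_neg at hq
      exact ha (Prod.ext hq.1 (Prod.ext hq.2.1 hq.2.2))
    have hcard2 : (univ : Finset (ZMod p × ZMod p)).card = p^2 := by
      simp [Fintype.card_prod, ZMod.card p, sq]
    rcases hcoord with h1 | h1 | h1
    · rw [← hcard2]
      apply Finset.card_le_card_of_injOn (fun u => (u.2.1, u.2.2)) (fun _ _ => mem_univ _)
      intro u hu v hv huv
      simp only [mem_coe, mem_filter, mem_univ, true_and] at hu hv
      simp only [Prod.mk.injEq] at huv
      have e1 : u.2.1 = v.2.1 := huv.1
      have e2 : u.2.2 = v.2.2 := huv.2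
      have key : (2*a.1) * u.1 = (2*a.1) * v.1 := by
        simp only [Q, Prod.fst_add, Prod.snd_add] at hu hv
        linear_combination hu - hv - (2*a.2.1)*e1 - (2*a.2.2)*e2
      have : u.1 = v.1 := mul_left_cancel₀ (mul_ne_zero h2 h1) key
      exact Prod.ext this (Prod.ext e1 e2)
    · rw [← hcard2]
      apply Finset.card_le_card_of_injOn (fun u => (u.1, u.2.2)) (fun _ _ => mem_univ _)
      intro u hu v hv huv
      simp only [mem_coe, mem_filter, mem_univ, true_and] at hu hv
      simp only [Prod.mk.injEq] at huv
      have e1 : u.1 = v.1 := huv.1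
      have e2 : u.2.2 = v.2.2 := huv.2
      have key : (2*a.2.1) * u.2.1 = (2*a.2.1) * v.2.1 := by
        simp only [Q, Prod.fst_add, Prod.snd_add] at hu hv
        linear_combination hu - hv - (2*a.1)*e1 - (2*a.2.2)*e2
      have : u.2.1 = v.2.1 := mul_left_cancel₀ (mul_ne_zero h2 h1) key
      exact Prod.ext e1 (Prod.ext this e2)
    · rw [← hcard2]
      apply Finset.card_le_card_of_injOn (fun u => (u.1, u.2.1)) (fun _ _ => mem_univ _)
      intro u hu v hv huv
      simp only [mem_coe, mem_filter, mem_univ, true_and] at hu hv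
      simp only [Prod.mk.injEq] at huv
      have e1 : u.1 = v.1 := huv.1
      have e2 : u.2.1 = v.2.1 := huv.2
      have key : (2*a.2.2) * u.2.2 = (2*a.2.2) * v.2.2 := by
        simp only [Q, Prod.fst_add, Prod.snd_add] at hu hv
        linear_combination hu - hv - (2*a.1)*e1 - (2*a.2.1)*e2
      have : u.2.2 = v.2.2 := mul_left_cancel₀ (mul_ne_zero h2 h1) key
      exact Prod.ext e1 (Prod.ext e2 this)

/-- The number of `y` with `y - x ∈ D` is `p^3`. -/
lemma card_D_translate (x : W p) :
    (univ.filter (fun y : W p => Dmem p (y - x))).card = p^3 := by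
  have himg : (univ.filter (fun y : W p => Dmem p (y - x)))
      = Finset.image (fun u : U p => x + (u, Q p u)) univ := by
    ext y
    simp only [mem_filter, mem_univ, true_and, Finset.mem_image]
    constructor
    · intro h
      refine ⟨(y - x).1, ?_⟩
      have : ((y - x).1, Q p (y - x).1) = y - x := by
        rw [← h]
      rw [this, add_sub_cancel]
    · rintro ⟨u, rfl⟩
      simp [Dmem, add_sub_cancel_left]
  rw [himg, Finset.card_image_of_injective _ ?_, ← card_U p]
  · exact Finset.card_univ
  · intro u v huv
    have := (add_right_injective x) huv
    exact (Prod.ext_iff.mp this).1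

/-- Pair count: for `x ≠ x'` the number of common `D`-neighbours is at most `p^2`. -/
lemma card_pair (hp2 : p ≠ 2) (x x' : W p) (hxx : x ≠ x') :
    (univ.filter (fun y : W p => Dmem p (y - x) ∧ Dmem p (y - x'))).card ≤ p^2 := by
  set w := x - x' with hwdef
  have hw : w ≠ 0 := sub_ne_zero.mpr hxx
  calc (univ.filter (fun y : W p => Dmem p (y - x) ∧ Dmem p (y - x'))).card
      ≤ (univ.filter (fun u : U p => Q p (u + w.1) = Q p u + w.2)).card := by
        apply Finset.card_le_card_of_injOn (fun y => (y - x).1)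
        · intro y hy
          simp only [mem_coe, mem_filter, mem_univ, true_and] at hy ⊢
          obtain ⟨h1, h2⟩ := hy
          simp only [Dmem] at h1 h2
          have e1 : (y - x).1 + w.1 = (y - x').1 := by
            simp only [hwdef, Prod.fst_sub]
            exact sub_add_sub_cancel _ _ _
          have e2 : (y - x).2 + w.2 = (y - x').2 := by
            simp only [hwdef, Prod.snd_sub]
            exact sub_add_sub_cancel _ _ _
          rw [e1, ← h1, ← h2]
          exact e2.symm
        · intro y hy y' hy' hee
          simp only [mem_coe, mem_filter, mem_univ, true_and] at hy hy'
          have h1 := hy.1; have h1' := hy'.1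
          simp only [Dmem] at h1 h1'
          dsimp only at hee
          have : y - x = y' - x := by
            refine Prod.ext hee ?_
            rw [h1, h1', hee]
          exact sub_left_injective this
    _ ≤ p^2 := key_pair p hp2 w hw

/-- The core contradiction: there are no two subsets of `W` of size `p^3`
with no `D`-edge between them. -/
lemma no_bad_pair (hp2 : p ≠ 2) (S T : Finset (W p))
    (hS : S.card = p^3) (hT : T.card = p^3)
    (hmain : ∀ x ∈ S, ∀ y ∈ T, ¬ Dmem p (y - x)) : False := by
  classical
  set d : W p → ℕ := fun y => (S.filter (fun x => Dmem p (y - x))).card with hd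
  have hA : ∑ y : W p, d y = p^3 * p^3 := by
    have : ∀ y : W p, d y = ∑ x ∈ S, (if Dmem p (y - x) then 1 else 0) := by
      intro y; rw [hd]; dsimp only; rw [Finset.card_filter]
    calc ∑ y : W p, d y = ∑ y : W p, ∑ x ∈ S, (if Dmem p (y - x) then 1 else 0) := by
          exact Finset.sum_congr rfl (fun y _ => this y)
      _ = ∑ x ∈ S, ∑ y : W p, (if Dmem p (y - x) then 1 else 0) := Finset.sum_comm
      _ = ∑ x ∈ S, (univ.filter (fun y : W p => Dmem p (y - x))).card := by
          refine Finset.sum_congr rfl (fun x _ => ?_)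
          rw [Finset.card_filter]
      _ = ∑ x ∈ S, p^3 := Finset.sum_congr rfl (fun x _ => card_D_translate p x)
      _ = p^3 * p^3 := by rw [Finset.sum_const, hS]; ring
  have hB : ∑ y : W p, (d y)^2 ≤ p^3 * p^3 + (p^3 * p^3) * p^2 := by
    have hsq : ∀ y : W p, (d y)^2 = ∑ x ∈ S, ∑ x' ∈ S,
        (if Dmem p (y - x) ∧ Dmem p (y - x') then 1 else 0) := by
      intro y
      rw [hd]
      dsimp only
      rw [sq, Finset.card_filter, Finset.sum_mul_sum]
      refine Finset.sum_congr rfl (fun x _ => Finset.sum_congr rfl (fun x' _ => ?_))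
      by_cases h1 : Dmem p (y - x) <;> by_cases h2 : Dmem p (y - x') <;> simp [h1, h2]
    calc ∑ y : W p, (d y)^2
        = ∑ x ∈ S, ∑ x' ∈ S, (univ.filter
            (fun y : W p => Dmem p (y - x) ∧ Dmem p (y - x'))).card := by
          rw [Finset.sum_congr rfl (fun y _ => hsq y)]
          rw [Finset.sum_comm]
          refine Finset.sum_congr rfl (fun x _ => ?_)
          rw [Finset.sum_comm]
          refine Finset.sum_congr rfl (fun x' _ => ?_)
          rw [Finset.card_filter]
      _ ≤ ∑ x ∈ S, ∑ x' ∈ S, (p^2 + if x' = x then p^3 else 0) := by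
          refine Finset.sum_le_sum (fun x hx => Finset.sum_le_sum (fun x' hx' => ?_))
          by_cases hxx : x = x'
          · subst hxx
            have hfe : (univ.filter (fun y : W p => Dmem p (y - x) ∧ Dmem p (y - x))).card = p^3 := by
              rw [← card_D_translate p x]
              congr 1
              ext y; simp
            rw [hfe, if_pos rfl]
            omega
          · have := card_pair p hp2 x x' hxx
            have hne : x' ≠ x := fun h => hxx h.symm
            rw [if_neg hne, add_zero]
            exact this
      _ = p^3 * p^3 + (p^3 * p^3) * p^2 := by
          have : ∀ x ∈ S, ∑ x' ∈ S, (p^2 + if x' = x then p^3 else 0)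
              = p^3 * p^2 + p^3 := by
            intro x hx
            rw [Finset.sum_add_distrib, Finset.sum_const, hS, Finset.sum_ite_eq' S x (fun _ => p^3)]
            simp [hx, mul_comm]
          rw [Finset.sum_congr rfl this, Finset.sum_const, hS]
          ring
  have hC : ∀ y ∈ T, d y = 0 := by
    intro y hy
    rw [hd]
    simp only [Finset.card_eq_zero]
    rw [Finset.filter_eq_empty_iff]
    intro x hx
    exact hmain x hx y hy
  set R : Finset (W p) := univ \ T with hR
  have hTsub : T ⊆ univ := Finset.subset_univ _
  have hcardR : R.card = p^4 - p^3 := by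
    rw [hR, Finset.card_sdiff_of_subset hTsub, Finset.card_univ, card_W p, hT]
  have hsumR : ∑ y ∈ R, d y = p^3 * p^3 := by
    have h0 := Finset.sum_sdiff (f := d) hTsub
    have hTzero : ∑ y ∈ T, d y = 0 := Finset.sum_eq_zero hC
    rw [hTzero, add_zero] at h0
    rw [hR]
    exact h0.trans hA
  have hsumsqR : ∑ y ∈ R, (d y)^2 ≤ p^3 * p^3 + (p^3 * p^3) * p^2 :=
    le_trans (Finset.sum_le_sum_of_subset (by rw [hR]; exact Finset.sdiff_subset)) hB
  have hcs := sq_sum_le_card_mul_sum_sq (s := R) (f := fun y => (d y : ℝ))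
  have hp1 : 1 ≤ p := (Fact.out : p.Prime).one_lt.le
  have hqq : (1:ℝ) ≤ (p:ℝ) := by exact_mod_cast hp1
  have hle : (p:ℕ)^3 ≤ (p:ℕ)^4 := Nat.pow_le_pow_right hp1 (by norm_num)
  have hL : (∑ y ∈ R, ((d y : ℝ)))^2 = ((p:ℝ)^3 * (p:ℝ)^3)^2 := by
    have : ∑ y ∈ R, ((d y : ℝ)) = ((p:ℝ)^3 * (p:ℝ)^3) := by
      rw [← Nat.cast_sum]
      rw [hsumR]
      push_cast
      ring
    rw [this]
  have hR1 : ((R.card : ℝ)) = (p:ℝ)^4 - (p:ℝ)^3 := by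
    rw [hcardR]
    push_cast [Nat.cast_sub hle]
    ring
  have hR2 : ∑ y ∈ R, ((d y : ℝ))^2 ≤ (p:ℝ)^3 * (p:ℝ)^3 + ((p:ℝ)^3 * (p:ℝ)^3) * (p:ℝ)^2 := by
    have : ∑ y ∈ R, ((d y : ℝ))^2 = ((∑ y ∈ R, (d y)^2 : ℕ) : ℝ) := by
      push_cast
      rfl
    rw [this]
    exact_mod_cast hsumsqR
  rw [hL, hR1] at hcs
  have hfinal : ((p:ℝ)^3 * (p:ℝ)^3)^2 ≤ ((p:ℝ)^4 - (p:ℝ)^3) * ((p:ℝ)^3 * (p:ℝ)^3 + ((p:ℝ)^3 * (p:ℝ)^3) * (p:ℝ)^2) := by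
    refine le_trans hcs ?_
    have hnn : (0:ℝ) ≤ (p:ℝ)^4 - (p:ℝ)^3 := by nlinarith
    exact mul_le_mul_of_nonneg_left hR2 hnn
  nlinarith [pow_pos (lt_of_lt_of_le one_pos hqq) 9, sq_nonneg ((p:ℝ) - 1),
    pow_pos (lt_of_lt_of_le one_pos hqq) 10]

section Graph

abbrev VT : Type := Fin (p^3) ⊕ W p

lemma card_VT : Fintype.card (VT p) = p^4 + p^3 := by
  simp [Fintype.card_sum, card_W p]
  ring

variable (e : Fin (p^4 + p^3) ≃ VT p)

/-- The graph `H`: complete block on the `Fin (p^3)` part, Cayley graph of `D` on `W`. -/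
def Hrel (a b : Fin (p^4 + p^3)) : Prop :=
  match e a, e b with
  | .inl _, .inl _ => True
  | .inr x, .inr y => Dmem p (y - x)
  | _, _ => False

lemma hrel_ll {a b} {c c'} (ha : e a = .inl c) (hb : e b = .inl c') : Hrel p e a b := by
  unfold Hrel; rw [ha, hb]; trivial

lemma hrel_lr {a b} {c y} (ha : e a = .inl c) (hb : e b = .inr y) : ¬ Hrel p e a b := by
  unfold Hrel; rw [ha, hb]; exact fun h => h

lemma hrel_rl {a b} {x c} (ha : e a = .inr x) (hb : e b = .inl c) : ¬ Hrel p e a b := by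
  unfold Hrel; rw [ha, hb]; exact fun h => h

lemma hrel_rr {a b} {x y} (ha : e a = .inr x) (hb : e b = .inr y) :
    Hrel p e a b ↔ Dmem p (y - x) := by
  unfold Hrel; rw [ha, hb]

/-- Row regularity. -/
lemma row_regular (a : Fin (p^4 + p^3)) :
    {b | Hrel p e a b}.ncard = p^3 := by
  rcases he : e a with c | x
  · have hset : {b | Hrel p e a b} = e.symm '' (Sum.inl '' (Set.univ : Set (Fin (p^3)))) := by
      ext b
      simp only [Set.mem_setOf_eq, Set.mem_image]
      constructor
      · intro hb
        rcases hb' : e b with c' | y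
        · exact ⟨.inl c', ⟨c', trivial, rfl⟩, by rw [← hb']; simp⟩
        · exact absurd hb (hrel_lr p e he hb')
      · rintro ⟨_, ⟨c', -, rfl⟩, rfl⟩
        have : e (e.symm (Sum.inl c')) = Sum.inl c' := e.apply_symm_apply _
        exact hrel_ll p e he this
    rw [hset, Set.ncard_image_of_injective _ e.symm.injective,
      Set.ncard_image_of_injective _ Sum.inl_injective, Set.ncard_univ]
    simp
  · have hset : {b | Hrel p e a b}
        = e.symm '' (Sum.inr '' ((fun u : U p => x + (u, Q p u)) '' Set.univ)) := by
      ext b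
      simp only [Set.mem_setOf_eq, Set.mem_image]
      constructor
      · intro hb
        rcases hb' : e b with c' | y
        · exact absurd hb (hrel_rl p e he hb')
        · have hd : Dmem p (y - x) := (hrel_rr p e he hb').mp hb
          refine ⟨.inr y, ⟨y, ⟨(y - x).1, trivial, ?_⟩, rfl⟩, by rw [← hb']; simp⟩
          have : ((y - x).1, Q p (y - x).1) = y - x := by rw [← hd]
          rw [this, add_sub_cancel]
      · rintro ⟨_, ⟨y, ⟨u, -, rfl⟩, rfl⟩, rfl⟩
        have hb' : e (e.symm (Sum.inr (x + (u, Q p u)))) = Sum.inr (x + (u, Q p u)) :=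
          e.apply_symm_apply _
        rw [hrel_rr p e he hb']
        simp [Dmem, add_sub_cancel_left]
    rw [hset, Set.ncard_image_of_injective _ e.symm.injective,
      Set.ncard_image_of_injective _ Sum.inr_injective,
      Set.ncard_image_of_injective _ ?_, Set.ncard_univ, Nat.card_eq_fintype_card, card_U]
    intro u v huv
    have := (add_right_injective x) huv
    exact (Prod.ext_iff.mp this).1

/-- Column regularity. -/
lemma col_regular (b : Fin (p^4 + p^3)) :
    {a | Hrel p e a b}.ncard = p^3 := by
  rcases he : e b with c | y
  · have hset : {a | Hrel p e a b} = e.symm '' (Sum.inl '' (Set.univ : Set (Fin (p^3)))) := by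
      ext a
      simp only [Set.mem_setOf_eq, Set.mem_image]
      constructor
      · intro hb
        rcases hb' : e a with c' | x
        · exact ⟨.inl c', ⟨c', trivial, rfl⟩, by rw [← hb']; simp⟩
        · exact absurd hb (hrel_rl p e hb' he)
      · rintro ⟨_, ⟨c', -, rfl⟩, rfl⟩
        have : e (e.symm (Sum.inl c')) = Sum.inl c' := e.apply_symm_apply _
        exact hrel_ll p e this he
    rw [hset, Set.ncard_image_of_injective _ e.symm.injective,
      Set.ncard_image_of_injective _ Sum.inl_injective, Set.ncard_univ]
    simp
  · have hset : {a | Hrel p e a b}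
        = e.symm '' (Sum.inr '' ((fun u : U p => y - (u, Q p u)) '' Set.univ)) := by
      ext a
      simp only [Set.mem_setOf_eq, Set.mem_image]
      constructor
      · intro hb
        rcases hb' : e a with c' | x
        · exact absurd hb (hrel_lr p e hb' he)
        · have hd : Dmem p (y - x) := (hrel_rr p e hb' he).mp hb
          refine ⟨.inr x, ⟨x, ⟨(y - x).1, trivial, ?_⟩, rfl⟩, by rw [← hb']; simp⟩
          have : ((y - x).1, Q p (y - x).1) = y - x := by rw [← hd]
          rw [this]
          exact sub_sub_cancel y x
      · rintro ⟨_, ⟨w, ⟨u, -, rfl⟩, rfl⟩, rfl⟩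
        have hb' : e (e.symm (Sum.inr (y - (u, Q p u)))) = Sum.inr (y - (u, Q p u)) :=
          e.apply_symm_apply _
        rw [hrel_rr p e hb' he]
        simp [Dmem, sub_sub_cancel]
    rw [hset, Set.ncard_image_of_injective _ e.symm.injective,
      Set.ncard_image_of_injective _ Sum.inr_injective,
      Set.ncard_image_of_injective _ ?_, Set.ncard_univ, Nat.card_eq_fintype_card, card_U]
    intro u v huv
    have : y - (u, Q p u) = y - (v, Q p v) := huv
    have h2 := sub_right_injective this
    exact (Prod.ext_iff.mp h2).1

/-- No perfect matching in the bipartite complement of `H` is acceptable for `H`. -/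
lemma no_acceptable (hp2 : p ≠ 2) :
    ¬ ∃ σ : Fin (p^4+p^3) ≃ Fin (p^4+p^3),
      AcceptableMatching (p^4+p^3) (fun a b => ¬ Hrel p e a b) (Hrel p e) σ := by
  rintro ⟨σ, hG, hPair⟩
  classical
  have hfT : ∀ c : Fin (p^3), ∃ y : W p, e (σ (e.symm (.inl c))) = .inr y := by
    intro c
    rcases h : e (σ (e.symm (.inl c))) with c' | y
    · exact absurd (hrel_ll p e (e.apply_symm_apply _) h) (hG (e.symm (.inl c)))
    · exact ⟨y, rfl⟩
  have hfS : ∀ c : Fin (p^3), ∃ x : W p, e (σ.symm (e.symm (.inl c))) = .inr x := by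
    intro c
    rcases h : e (σ.symm (e.symm (.inl c))) with c' | x
    · have hb : e (σ (σ.symm (e.symm (.inl c)))) = .inl c := by
        rw [σ.apply_symm_apply, e.apply_symm_apply]
      exact absurd (hrel_ll p e h hb) (hG _)
    · exact ⟨x, rfl⟩
  set fT : Fin (p^3) → W p := fun c => (hfT c).choose with hfTdef
  set fS : Fin (p^3) → W p := fun c => (hfS c).choose with hfSdef
  have hfTspec : ∀ c, e (σ (e.symm (.inl c))) = .inr (fT c) := fun c => (hfT c).choose_spec
  have hfSspec : ∀ c, e (σ.symm (e.symm (.inl c))) = .inr (fS c) := fun c => (hfS c).choose_spec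
  have hfTinj : Function.Injective fT := by
    intro c c' hcc
    have h1 : σ (e.symm (.inl c)) = σ (e.symm (.inl c')) :=
      e.injective (by rw [hfTspec, hfTspec, hcc])
    exact Sum.inl_injective (e.symm.injective (σ.injective h1))
  have hfSinj : Function.Injective fS := by
    intro c c' hcc
    have h1 : σ.symm (e.symm (.inl c)) = σ.symm (e.symm (.inl c')) :=
      e.injective (by rw [hfSspec, hfSspec, hcc])
    exact Sum.inl_injective (e.symm.injective (σ.symm.injective h1))
  have hmain : ∀ x ∈ Finset.image fS univ, ∀ y ∈ Finset.image fT univ, ¬ Dmem p (y - x) := by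
    intro x hx y hy
    rcases Finset.mem_image.mp hx with ⟨cb, -, rfl⟩
    rcases Finset.mem_image.mp hy with ⟨ca, -, rfl⟩
    set a := e.symm (.inl ca) with hadef
    set a' := σ.symm (e.symm (.inl cb)) with ha'def
    have hea : e a = .inl ca := e.apply_symm_apply _
    have hea' : e a' = .inr (fS cb) := hfSspec cb
    have hne : a ≠ a' := by
      intro h
      rw [h, hea'] at hea
      cases hea
    have hforward : Hrel p e a (σ a') := by
      have hb : e (σ a') = .inl cb := by
        rw [ha'def, σ.apply_symm_apply, e.apply_symm_apply]
      exact hrel_ll p e hea hb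
    have hback := hPair a a' hne
    intro hD
    refine hback ⟨hforward, ?_⟩
    rw [hrel_rr p e hea' (hfTspec ca)]
    exact hD
  exact no_bad_pair p hp2 (Finset.image fS univ) (Finset.image fT univ)
    (by rw [Finset.card_image_of_injective _ hfSinj]; simp)
    (by rw [Finset.card_image_of_injective _ hfTinj]; simp)
    hmain

end Graph

end BFN

/-- Packaged existence statement for a given odd prime. -/
lemma main_for_prime (p : ℕ) (hp : p.Prime) (hp2 : p ≠ 2) :
    ∃ H : Fin (p^4 + p^3) → Fin (p^4 + p^3) → Prop, BipRegular (p^4 + p^3) (p^3) H ∧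
      ¬ ∃ σ : Fin (p^4+p^3) ≃ Fin (p^4+p^3),
        AcceptableMatching (p^4+p^3) (fun a b => ¬ H a b) H σ := by
  haveI : Fact p.Prime := ⟨hp⟩
  have hcard : Fintype.card (Fin (p^4 + p^3)) = Fintype.card (BFN.VT p) := by
    rw [BFN.card_VT p, Fintype.card_fin]
  let e : Fin (p^4 + p^3) ≃ BFN.VT p := Fintype.equivOfCardEq hcard
  exact ⟨BFN.Hrel p e, ⟨BFN.row_regular p e, BFN.col_regular p e⟩, BFN.no_acceptable p e hp2⟩

/-- **Theorem.**  For every `ε > 0` there are infinitely many `n` for which there is a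
positive integer `s ≤ (2+ε)·n^{3/4}` and an `s`-regular bipartite graph `H` on parts of
size `n` such that no perfect matching in the bipartite complement of `H` is acceptable
for `H`.  Consequently `b(n) < (2+o(1))·n^{3/4}` for infinitely many `n`. -/
theorem bFn_upper_bound : ∀ ε : ℝ, 0 < ε → ∀ N : ℕ, ∃ n : ℕ, N ≤ n ∧
    (∃ s : ℕ, 0 < s ∧ (s : ℝ) ≤ (2 + ε) * (n : ℝ) ^ ((3 : ℝ) / 4) ∧
      ∃ H : Fin n → Fin n → Prop, BipRegular n s H ∧
        ¬ ∃ σ : Fin n ≃ Fin n, AcceptableMatching n (fun a b => ¬ H a b) H σ) ∧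
    (bFn n : ℝ) < (2 + ε) * (n : ℝ) ^ ((3 : ℝ) / 4) := by
  intro ε hε N
  obtain ⟨p, hpge, hp⟩ := Nat.exists_infinite_primes (max N 3)
  have hp2 : p ≠ 2 := by
    have := le_trans (le_max_right N 3) hpge
    omega
  have hpN : N ≤ p := le_trans (le_max_left N 3) hpge
  have hp1 : 1 ≤ p := hp.one_lt.le
  set n := p^4 + p^3 with hn
  have hnN : N ≤ n := by
    have : p ≤ p^4 := Nat.le_self_pow (by norm_num) p
    omega
  have hq0 : (0:ℝ) ≤ (p:ℝ) := by positivity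
  have hcast : ((p:ℝ))^(4:ℕ) ≤ (n:ℝ) := by
    have : (p:ℕ)^4 ≤ n := by omega
    exact_mod_cast this
  have hrpow : ((p:ℝ))^(3:ℕ) ≤ (n:ℝ) ^ ((3:ℝ)/4) := by
    have h1 : (((p:ℝ))^(4:ℕ)) ^ ((3:ℝ)/4) ≤ (n:ℝ) ^ ((3:ℝ)/4) :=
      Real.rpow_le_rpow (by positivity) hcast (by norm_num)
    have e3 : ((p:ℝ))^(3:ℕ) = ((p:ℝ)) ^ ((3:ℝ)) := by
      rw [← Real.rpow_natCast (p:ℝ) 3]; norm_num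
    have e4 : ((p:ℝ))^(4:ℕ) = ((p:ℝ)) ^ ((4:ℝ)) := by
      rw [← Real.rpow_natCast (p:ℝ) 4]; norm_num
    calc ((p:ℝ))^(3:ℕ) = ((p:ℝ))^((3:ℝ)) := e3
      _ = (((p:ℝ))^((4:ℝ))) ^ ((3:ℝ)/4) := by
          rw [← Real.rpow_mul hq0]; norm_num
      _ = (((p:ℝ))^(4:ℕ)) ^ ((3:ℝ)/4) := by rw [e4]
      _ ≤ (n:ℝ) ^ ((3:ℝ)/4) := h1
  have hsle : ((p^3 : ℕ) : ℝ) ≤ (2 + ε) * (n:ℝ) ^ ((3:ℝ)/4) := by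
    push_cast
    calc ((p:ℝ))^(3:ℕ) ≤ (n:ℝ) ^ ((3:ℝ)/4) := hrpow
      _ ≤ (2 + ε) * (n:ℝ) ^ ((3:ℝ)/4) := by
          nlinarith [Real.rpow_nonneg (by positivity : (0:ℝ) ≤ (n:ℝ)) ((3:ℝ)/4)]
  obtain ⟨H, hreg, hno⟩ := main_for_prime p hp hp2
  refine ⟨n, hnN, ⟨p^3, by positivity, hsle, H, hreg, hno⟩, ?_⟩
  have hmem : p^3 ∈ {s : ℕ | ∃ H : Fin n → Fin n → Prop, BipRegular n s H ∧
      ¬ ∃ σ : Fin n ≃ Fin n, AcceptableMatching n (fun a b => ¬ H a b) H σ} :=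
    ⟨H, hreg, hno⟩
  have hble : bFn n ≤ p^3 := Nat.sInf_le hmem
  have hblecast : ((bFn n : ℕ) : ℝ) ≤ ((p^3 : ℕ) : ℝ) := by exact_mod_cast hble
  have hstrict : ((p^3 : ℕ) : ℝ) < (2 + ε) * (n:ℝ) ^ ((3:ℝ)/4) := by
    push_cast
    have hq1 : (1:ℝ) ≤ (p:ℝ) := by exact_mod_cast hp1
    have hpos : (0:ℝ) < ((p:ℝ))^(3:ℕ) := by positivity
    nlinarith [hrpow]
  exact lt_of_le_of_lt hblecast hstrict
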